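/- arXiv:1712.03324 — 5 statements merged into one kernel-verified Lean document; each statement's English description precedes it below -/
import Mathlib

section
/- Let (X, 𝓔) and (Y, 𝓕) be coarse spaces that both have coarse property C. Then the product coarse space (X × Y, 𝓔 ∗ 𝓕) has coarse property C. -/
/-- A coarse structure on a set `X`: a collection of subsets of `X × X` (entourages)
containing the diagonal and closed under subsets, finite unions, inverses and composition. -/
structure CoarseStructure (X : Type*) where
  sets : Set (Set (X × X))
  diagonal_mem : {p : X × X | p.1 = p.2} ∈ sets
  subset_mem : ∀ E ∈ sets, ∀ F : Set (X × X), F ⊆ E → F ∈ sets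
  union_mem : ∀ E ∈ sets, ∀ F ∈ sets, E ∪ F ∈ sets
  inv_mem : ∀ E ∈ sets, {p : X × X | (p.2, p.1) ∈ E} ∈ sets
  comp_mem : ∀ E ∈ sets, ∀ F ∈ sets,
    {p : X × X | ∃ y, (p.1, y) ∈ E ∧ (y, p.2) ∈ F} ∈ sets

/-- A family `𝒰` of subsets of `X` is `E`-disjoint if for all distinct `U, V ∈ 𝒰`,
`(U × V) ∩ E = ∅`. -/
def EDisjoint {X : Type*} (E : Set (X × X)) (𝒰 : Set (Set X)) : Prop :=
  ∀ U ∈ 𝒰, ∀ V ∈ 𝒰, U ≠ V → (U ×ˢ V) ∩ E = ∅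

/-- A family `𝒰` is uniformly bounded if `⋃_{U ∈ 𝒰} U × U` is an entourage. -/
def UniformlyBounded {X : Type*} (𝓔 : CoarseStructure X) (𝒰 : Set (Set X)) : Prop :=
  (⋃ U ∈ 𝒰, U ×ˢ U) ∈ 𝓔.sets

/-- The image of `E ⊆ (X × Y) × (X × Y)` under `p₁ × p₁`. -/
def projFst {X Y : Type*} (E : Set ((X × Y) × (X × Y))) : Set (X × X) :=
  (fun p : (X × Y) × (X × Y) => (p.1.1, p.2.1)) '' E

/-- The image of `E ⊆ (X × Y) × (X × Y)` under `p₂ × p₂`. -/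
def projSnd {X Y : Type*} (E : Set ((X × Y) × (X × Y))) : Set (Y × Y) :=
  (fun p : (X × Y) × (X × Y) => (p.1.2, p.2.2)) '' E

/-- The product coarse structure `𝓔 ∗ 𝓕` on `X × Y`. -/
def prodCoarse {X Y : Type*} (𝓔 : CoarseStructure X) (𝓕 : CoarseStructure Y) :
    CoarseStructure (X × Y) where
  sets := {E | projFst E ∈ 𝓔.sets ∧ projSnd E ∈ 𝓕.sets}
  diagonal_mem := by
    constructor
    · refine 𝓔.subset_mem _ 𝓔.diagonal_mem _ ?_
      rintro ⟨a, b⟩ ⟨⟨p, q⟩, hpq, h⟩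
      simp only [Set.mem_setOf_eq] at hpq
      cases h
      simp [hpq]
    · refine 𝓕.subset_mem _ 𝓕.diagonal_mem _ ?_
      rintro ⟨a, b⟩ ⟨⟨p, q⟩, hpq, h⟩
      simp only [Set.mem_setOf_eq] at hpq
      cases h
      simp [hpq]
  subset_mem := by
    rintro E ⟨hE1, hE2⟩ F hFE
    exact ⟨𝓔.subset_mem _ hE1 _ (Set.image_mono hFE),
      𝓕.subset_mem _ hE2 _ (Set.image_mono hFE)⟩
  union_mem := by
    rintro E ⟨hE1, hE2⟩ F ⟨hF1, hF2⟩
    constructor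
    · rw [projFst, Set.image_union]
      exact 𝓔.union_mem _ hE1 _ hF1
    · rw [projSnd, Set.image_union]
      exact 𝓕.union_mem _ hE2 _ hF2
  inv_mem := by
    rintro E ⟨hE1, hE2⟩
    constructor
    · refine 𝓔.subset_mem _ (𝓔.inv_mem _ hE1) _ ?_
      rintro ⟨a, b⟩ ⟨⟨p, q⟩, hpq, h⟩
      cases h
      exact ⟨(q, p), hpq, rfl⟩
    · refine 𝓕.subset_mem _ (𝓕.inv_mem _ hE2) _ ?_
      rintro ⟨a, b⟩ ⟨⟨p, q⟩, hpq, h⟩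
      cases h
      exact ⟨(q, p), hpq, rfl⟩
  comp_mem := by
    rintro E ⟨hE1, hE2⟩ F ⟨hF1, hF2⟩
    constructor
    · refine 𝓔.subset_mem _ (𝓔.comp_mem _ hE1 _ hF1) _ ?_
      rintro ⟨a, b⟩ ⟨⟨p, q⟩, ⟨y, hy1, hy2⟩, h⟩
      cases h
      exact ⟨y.1, ⟨(p, y), hy1, rfl⟩, ⟨(y, q), hy2, rfl⟩⟩
    · refine 𝓕.subset_mem _ (𝓕.comp_mem _ hE2 _ hF2) _ ?_
      rintro ⟨a, b⟩ ⟨⟨p, q⟩, ⟨y, hy1, hy2⟩, h⟩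
      cases h
      exact ⟨y.2, ⟨(p, y), hy1, rfl⟩, ⟨(y, q), hy2, rfl⟩⟩
/-- `Y` admits an `(E, n)`-decomposition over `𝒰` if `Y = Y¹ ∪ ⋯ ∪ Yⁿ` where each `Yⁱ`
is the union of an `E`-disjoint subfamily of `𝒰`. -/
def AdmitsDecomposition {X : Type*} (E : Set (X × X)) (n : ℕ) (Y : Set X)
    (𝒰 : Set (Set X)) : Prop :=
  ∃ Z : Fin n → Set X, Y = ⋃ i, Z i ∧
    ∀ i, ∃ 𝒟 ⊆ 𝒰, EDisjoint E 𝒟 ∧ Z i = ⋃₀ 𝒟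

/-- Coarse property C: for every increasing sequence of entourages `E₁ ⊆ E₂ ⊆ ⋯`
there are finitely many families `𝒰₁, …, 𝒰ₙ` that together cover `X`, with `𝒰ᵢ`
being `Eᵢ`-disjoint and uniformly bounded. -/
def CoarsePropertyC {X : Type*} (𝓔 : CoarseStructure X) : Prop :=
  ∀ E : ℕ → Set (X × X), (∀ i, E i ∈ 𝓔.sets) → (∀ i, E i ⊆ E (i + 1)) →
    ∃ n : ℕ, ∃ 𝒰 : ℕ → Set (Set X),
      (∀ x : X, ∃ i < n, ∃ U ∈ 𝒰 i, x ∈ U) ∧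
      (∀ i < n, EDisjoint (E i) (𝒰 i)) ∧
      (∀ i < n, UniformlyBounded 𝓔 (𝒰 i))

/-- The sequence `n` witnesses coarse countable asymptotic dimension for `(X, 𝓔)`:
for every sequence of entourages `Kᵢ` there is a finite chain of families starting at
`{X}`, where each member of the `i`-th family admits a `(Kᵢ, nᵢ)`-decomposition over the
next family, ending with a uniformly bounded family. -/
def CAsdimWitness {X : Type*} (𝓔 : CoarseStructure X) (n : ℕ → ℕ) : Prop :=
  ∀ K : ℕ → Set (X × X), (∀ i, K i ∈ 𝓔.sets) →
    ∃ r : ℕ, ∃ 𝒱 : ℕ → Set (Set X),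
      𝒱 0 = {Set.univ} ∧
      (∀ i < r, ∀ V ∈ 𝒱 i, AdmitsDecomposition (K i) (n i) V (𝒱 (i + 1))) ∧
      UniformlyBounded 𝓔 (𝒱 r)

/-- Coarse countable asymptotic dimension. -/
def CoarseCountableAsdim {X : Type*} (𝓔 : CoarseStructure X) : Prop :=
  ∃ n : ℕ → ℕ, (∀ i, 0 < n i) ∧ CAsdimWitness 𝓔 n

/-- Straight finite coarse decomposition complexity (sFCDC). -/
def SFCDC {X : Type*} (𝓔 : CoarseStructure X) : Prop :=
  ∀ L : ℕ → Set (X × X), (∀ i, L i ∈ 𝓔.sets) →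
    ∃ m : ℕ, ∃ 𝒱 : ℕ → Set (Set X),
      𝒱 0 = {Set.univ} ∧
      (∀ i < m, ∀ V ∈ 𝒱 i, AdmitsDecomposition (L i) 2 V (𝒱 (i + 1))) ∧
      UniformlyBounded 𝓔 (𝒱 m)

/-- Coarse property C is preserved by finite coarse direct products:
if `(X, 𝓔)` and `(Y, 𝓕)` have coarse property C, then so does `(X × Y, 𝓔 ∗ 𝓕)`. -/
theorem coarsePropertyC_prod {X Y : Type*} (𝓔 : CoarseStructure X) (𝓕 : CoarseStructure Y)
    (hX : CoarsePropertyC 𝓔) (hY : CoarsePropertyC 𝓕) :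
    CoarsePropertyC (prodCoarse 𝓔 𝓕) := by
  intro E hE hEmono
  have hEm : Monotone E := monotone_nat_of_le_succ hEmono
  -- apply property C of X at every offset
  have hXo : ∀ o : ℕ, ∃ k : ℕ, ∃ 𝒰 : ℕ → Set (Set X),
      (∀ x : X, ∃ i < k, ∃ U ∈ 𝒰 i, x ∈ U) ∧
      (∀ i < k, EDisjoint (projFst (E (o + i))) (𝒰 i)) ∧
      (∀ i < k, UniformlyBounded 𝓔 (𝒰 i)) := by
    intro o
    exact hX (fun s => projFst (E (o + s))) (fun s => (hE (o + s)).1)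
      (fun s => Set.image_mono (hEm (by omega)))
  choose nn 𝒰 hUcov hUdisj hUub using hXo
  -- recursive offsets
  obtain ⟨f, hf0, hfS⟩ : ∃ f : ℕ → ℕ, f 0 = 0 ∧ ∀ j, f (j + 1) = f j + nn (f j) + 1 :=
    ⟨fun j => Nat.rec 0 (fun _ p => p + nn p + 1) j, rfl, fun j => rfl⟩
  have hfmono : Monotone f := monotone_nat_of_le_succ (fun j => by rw [hfS j]; omega)
  have hkey : ∀ j i, i < nn (f j) → f j + i < f (j + 1) := by
    intro j i hi; rw [hfS j]; omega
  -- apply property C of Y once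
  obtain ⟨m, 𝒱, hVcov, hVdisj, hVub⟩ :=
    hY (fun j => projSnd (E (f j + nn (f j)))) (fun j => (hE (f j + nn (f j))).2)
      (fun j => Set.image_mono (hEm (by have := hfS j; omega)))
  have huniq : ∀ j j' i i', i < nn (f j) → i' < nn (f j') →
      f j + i = f j' + i' → j = j' := by
    intro j j' i i' hi hi' heq
    by_contra hne
    rcases Nat.lt_or_ge j j' with h | h
    · have h1 : f j + i < f (j + 1) := hkey j i hi
      have h2 : f (j + 1) ≤ f j' := hfmono h
      omega
    · have h' : j' < j := by omega
      have h1 : f j' + i' < f (j' + 1) := hkey j' i' hi'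
      have h2 : f (j' + 1) ≤ f j := hfmono h'
      omega
  refine ⟨f m, fun t => {W | ∃ j < m, ∃ i < nn (f j), t = f j + i ∧
      ∃ U ∈ 𝒰 (f j) i, ∃ V ∈ 𝒱 j, W = U ×ˢ V}, ?_, ?_, ?_⟩
  · -- cover
    rintro ⟨x, y⟩
    obtain ⟨j, hj, V, hV, hyV⟩ := hVcov y
    obtain ⟨i, hi, U, hU, hxU⟩ := hUcov (f j) x
    exact ⟨f j + i, lt_of_lt_of_le (hkey j i hi) (hfmono (Nat.succ_le_of_lt hj)),
      U ×ˢ V, ⟨j, hj, i, hi, rfl, U, hU, V, hV, rfl⟩, ⟨hxU, hyV⟩⟩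
  · -- disjointness
    rintro t ht W hW W' hW' hne
    obtain ⟨j, hj, i, hi, hti, U, hU, V, hV, rfl⟩ := hW
    obtain ⟨j', hj', i', hi', hti', U', hU', V', hV', rfl⟩ := hW'
    subst hti
    have hjj : j = j' := huniq j j' i i' hi hi' hti'
    subst hjj
    have hii : i = i' := by omega
    subst hii
    apply Set.eq_empty_iff_forall_notMem.mpr
    rintro ⟨p, q⟩ ⟨⟨hpW, hqW⟩, hpqE⟩
    by_cases hVV : V = V'
    · subst hVV
      have hUU : U ≠ U' := fun h => hne (by rw [h])
      exact Set.eq_empty_iff_forall_notMem.mp (hUdisj (f j) i hi U hU U' hU' hUU)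
        (p.1, q.1) ⟨⟨hpW.1, hqW.1⟩, ⟨(p, q), hpqE, rfl⟩⟩
    · exact Set.eq_empty_iff_forall_notMem.mp (hVdisj j hj V hV V' hV' hVV)
        (p.2, q.2) ⟨⟨hpW.2, hqW.2⟩,
          ⟨(p, q), hEm (by omega : f j + i ≤ f j + nn (f j)) hpqE, rfl⟩⟩
  · -- uniform boundedness
    rintro t ht
    by_cases hex : ∃ j, j < m ∧ ∃ i, i < nn (f j) ∧ t = f j + i
    · obtain ⟨j, hj, i, hi, hti⟩ := hex
      refine ⟨?_, ?_⟩
      · refine 𝓔.subset_mem _ (hUub (f j) i hi) _ ?_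
        rintro ab ⟨⟨p, q⟩, hpq, rfl⟩
        simp only [Set.mem_iUnion, exists_prop] at hpq
        obtain ⟨W, hW, hpqW⟩ := hpq
        obtain ⟨j2, hj2, i2, hi2, hti2, U, hU, V, hV, rfl⟩ := hW
        have hj2j : j2 = j := huniq j2 j i2 i hi2 hi (by omega)
        subst hj2j
        have : i2 = i := by omega
        subst this
        exact Set.mem_biUnion hU ⟨hpqW.1.1, hpqW.2.1⟩
      · refine 𝓕.subset_mem _ (hVub j hj) _ ?_
        rintro ab ⟨⟨p, q⟩, hpq, rfl⟩
        simp only [Set.mem_iUnion, exists_prop] at hpq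
        obtain ⟨W, hW, hpqW⟩ := hpq
        obtain ⟨j2, hj2, i2, hi2, hti2, U, hU, V, hV, rfl⟩ := hW
        have hj2j : j2 = j := huniq j2 j i2 i hi2 hi (by omega)
        subst hj2j
        exact Set.mem_biUnion hV ⟨hpqW.1.2, hpqW.2.2⟩
    · have hempty : (⋃ W ∈ {W | ∃ j < m, ∃ i < nn (f j), t = f j + i ∧
          ∃ U ∈ 𝒰 (f j) i, ∃ V ∈ 𝒱 j, W = U ×ˢ V}, W ×ˢ W)
          = (∅ : Set ((X × Y) × (X × Y))) := by
        apply Set.eq_empty_iff_forall_notMem.mpr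
        intro z hz
        simp only [Set.mem_iUnion, exists_prop] at hz
        obtain ⟨W, ⟨j, hj, i, hi, hti, _⟩, _⟩ := hz
        exact hex ⟨j, hj, i, hi, hti⟩
      show (⋃ W ∈ _, W ×ˢ W) ∈ (prodCoarse 𝓔 𝓕).sets
      rw [hempty]
      exact (prodCoarse 𝓔 𝓕).subset_mem _ (prodCoarse 𝓔 𝓕).diagonal_mem ∅
        (Set.empty_subset _)
end

section
/- Let (X, 𝓔) be a coarse space. The following are equivalent: (1) there is a sequence (nᵢ) of positive integers such that for every sequence of entourages K₁, K₂, … in 𝓔 there is a finite sequence of families 𝒱₁, …, 𝒱ᵣ of subsets of X such that 𝒱₁ = {X}, every V ∈ 𝒱ᵢ admits a (Kᵢ, nᵢ)-decomposition over 𝒱ᵢ₊₁ for every 1 ≤ i < r, and 𝒱ᵣ is uniformly bounded; (2) for every sequence of entourages L₁, L₂, … in 𝓔 there is a finite sequence of families 𝒰₁, …, 𝒰ₛ of subsets of X such that 𝒰₁ = {X}, every U ∈ 𝒰ᵢ admits an (Lᵢ, 2)-decomposition over 𝒰ᵢ₊₁ for every 1 ≤ i < s, and 𝒰ₛ is uniformly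 bounded. -/
section AuxForMain
variable {X : Type*}

lemma eDisjoint_mono {E F : Set (X × X)} (hFE : F ⊆ E) {𝒰 : Set (Set X)}
    (h : EDisjoint E 𝒰) : EDisjoint F 𝒰 := by
  intro U hU V hV hUV
  apply Set.eq_empty_of_subset_empty
  rw [← h U hU V hV hUV]
  exact Set.inter_subset_inter_right _ hFE

lemma eDisjoint_empty (E : Set (X × X)) : EDisjoint E (∅ : Set (Set X)) :=
  fun U hU => absurd hU (Set.notMem_empty U)

lemma eDisjoint_singleton (E : Set (X × X)) (W : Set X) : EDisjoint E {W} := by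
  intro U hU V hV hUV
  rw [Set.mem_singleton_iff] at hU hV
  exact absurd (hU.trans hV.symm) hUV

lemma admits_union {E : Set (X × X)} {A B W : Set X} {𝒰 : Set (Set X)} (hW : W = A ∪ B)
    (hA : ∃ 𝒟 ⊆ 𝒰, EDisjoint E 𝒟 ∧ A = ⋃₀ 𝒟) (hB : ∃ 𝒟 ⊆ 𝒰, EDisjoint E 𝒟 ∧ B = ⋃₀ 𝒟) :
    AdmitsDecomposition E 2 W 𝒰 := by
  refine ⟨fun t => if t = 0 then A else B, ?_, ?_⟩
  · rw [hW]; ext x; simp [Fin.exists_fin_two]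
  · intro t
    by_cases ht : t = 0
    · simpa [ht] using hA
    · simpa [ht] using hB

lemma admits_self {E : Set (X × X)} {W : Set X} {𝒰 : Set (Set X)} (h : W ∈ 𝒰) :
    AdmitsDecomposition E 2 W 𝒰 :=
  admits_union (A := W) (B := ∅) (Set.union_empty W).symm
    ⟨{W}, Set.singleton_subset_iff.mpr h, eDisjoint_singleton E W,
      (Set.sUnion_singleton W).symm⟩
    ⟨∅, Set.empty_subset _, eDisjoint_empty E, Set.sUnion_empty.symm⟩

end AuxForMain

/-- The coarse analog of Dydak's countable asymptotic dimension is equivalent to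
straight finite coarse decomposition complexity. -/
theorem countableAsdim_iff_sFCDC {X : Type*} (𝓔 : CoarseStructure X) :
    (∃ n : ℕ → ℕ, (∀ i, 0 < n i) ∧ CAsdimWitness 𝓔 n) ↔ SFCDC 𝓔 := by
  constructor
  · rintro ⟨n, hn, hw⟩
    intro L hL
    classical
    -- partial sums
    set S : ℕ → ℕ := fun i => ∑ j ∈ Finset.range i, n j with hS
    have hSsucc : ∀ i, S (i + 1) = S i + n i := fun i => Finset.sum_range_succ n i
    have hS0 : S 0 = 0 := rfl
    have hSmono : Monotone S := monotone_nat_of_le_succ (fun i => by rw [hSsucc]; omega)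
    have hSstrict : StrictMono S := strictMono_nat_of_lt_succ
      (fun i => by have := hn i; rw [hSsucc]; omega)
    -- the entourages K
    set K : ℕ → Set (X × X) := fun i => ⋃ t ∈ Finset.Ico (S i) (S (i + 1)), L t with hKdef
    have hfin : ∀ s : Finset ℕ, (⋃ t ∈ s, L t) ∈ 𝓔.sets := by
      intro s
      induction s using Finset.induction with
      | empty =>
        refine 𝓔.subset_mem _ 𝓔.diagonal_mem _ ?_
        simp
      | insert a s h ih =>
        rw [Finset.set_biUnion_insert]
        exact 𝓔.union_mem _ (hL _) _ ih
    have hK : ∀ i, K i ∈ 𝓔.sets := fun i => hfin _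
    obtain ⟨r, 𝒱, h0, hdec, hub⟩ := hw K hK
    -- choose ℕ-indexed decompositions
    have key : ∀ i V, ∃ Z : ℕ → Set X, i < r → V ∈ 𝒱 i →
        (V = ⋃ t, Z t) ∧ (∀ t, ∃ 𝒟 ⊆ 𝒱 (i + 1), EDisjoint (K i) 𝒟 ∧ Z t = ⋃₀ 𝒟) ∧
        (∀ t, n i ≤ t → Z t = ∅) := by
      intro i V
      by_cases h : i < r ∧ V ∈ 𝒱 i
      · obtain ⟨Zf, hZf1, hZf2⟩ := hdec i h.1 V h.2
        refine ⟨fun t => if ht : t < n i then Zf ⟨t, ht⟩ else ∅, fun _ _ => ⟨?_, ?_, ?_⟩⟩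
        · rw [hZf1]; ext x
          simp only [Set.mem_iUnion]
          constructor
          · rintro ⟨t, hx⟩
            exact ⟨(t : ℕ), by simp only [t.isLt, dif_pos]; exact hx⟩
          · rintro ⟨t, hx⟩
            by_cases ht : t < n i
            · exact ⟨⟨t, ht⟩, by simpa [ht] using hx⟩
            · simp [ht] at hx
        · intro t
          by_cases ht : t < n i
          · simpa [ht] using hZf2 ⟨t, ht⟩
          · exact ⟨∅, Set.empty_subset _, eDisjoint_empty _, by simp [ht]⟩
        · intro t ht
          simp [Nat.not_lt.mpr ht]
      · exact ⟨fun _ => ∅, fun h1 h2 => absurd ⟨h1, h2⟩ h⟩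
    choose Z hZ using key
    -- the tails
    set T : ℕ → Set X → ℕ → Set X := fun i V j => ⋃ t, ⋃ (_ : j ≤ t), Z i V t with hT
    have hT0 : ∀ i V, i < r → V ∈ 𝒱 i → T i V 0 = V := by
      intro i V hi hV
      have h1 : T i V 0 = ⋃ t, Z i V t := by simp [hT]
      rw [h1]
      exact ((hZ i V hi hV).1).symm
    have hTsplit : ∀ i V j, T i V j = Z i V j ∪ T i V (j + 1) := by
      intro i V j
      ext x
      simp only [hT, Set.mem_iUnion, Set.mem_union]
      constructor
      · rintro ⟨t, ht, hx⟩
        rcases eq_or_lt_of_le ht with h | h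
        · exact Or.inl (h ▸ hx)
        · exact Or.inr ⟨t, h, hx⟩
      · rintro (hx | ⟨t, ht, hx⟩)
        · exact ⟨j, le_refl j, hx⟩
        · exact ⟨t, by omega, hx⟩
    have hTempty : ∀ i V j, i < r → V ∈ 𝒱 i → n i ≤ j → T i V j = ∅ := by
      intro i V j hi hV hnj
      simp only [hT]
      apply Set.eq_empty_iff_forall_notMem.mpr
      intro x hx
      simp only [Set.mem_iUnion] at hx
      obtain ⟨t, ht, hx⟩ := hx
      rw [(hZ i V hi hV).2.2 t (by omega)] at hx
      exact hx
    -- the block index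
    set I : ℕ → ℕ := fun s => Nat.findGreatest (fun i => S i ≤ s) r with hI
    have hIle : ∀ s, S (I s) ≤ s := by
      intro s
      exact Nat.findGreatest_spec (P := fun i => S i ≤ s) (Nat.zero_le r) (by simp [hS0])
    have hIbd : ∀ s, I s ≤ r := fun s => Nat.findGreatest_le r
    have hIuniq : ∀ i u, i ≤ r → S i ≤ u → u < S (i + 1) → I u = i := by
      intro i u hir h1 h2
      have hge : i ≤ I u := Nat.le_findGreatest hir h1
      have hle : I u ≤ i := by
        by_contra h
        push_neg at h
        have := hSmono (show i + 1 ≤ I u by omega)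
        have := hIle u
        omega
      omega
    have hIlt : ∀ s, s < S r → I s < r := by
      intro s hs
      rcases lt_or_eq_of_le (hIbd s) with h | h
      · exact h
      · exfalso; have := hIle s; rw [h] at this; omega
    -- the chain of families
    set U : ℕ → Set (Set X) := fun s =>
      if S r ≤ s then 𝒱 r
      else {W | ∃ V ∈ 𝒱 (I s), W = T (I s) V (s - S (I s))} ∪
        (if 1 ≤ s - S (I s) then 𝒱 (I s + 1) else ∅) with hU
    refine ⟨S r, U, ?_, ?_, ?_⟩
    · -- U 0 = {univ}
      by_cases hr : S r ≤ 0
      · have hr0 : r = 0 := by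
          by_contra h
          have := hSstrict (Nat.pos_of_ne_zero h)
          rw [hS0] at this; omega
        simp only [hU]
        rw [if_pos hr, hr0]
        exact h0
      · push_neg at hr
        have hrpos : 0 < r := by
          by_contra h
          push_neg at h
          interval_cases r
          simp [hS0] at hr
        have hI0 : I 0 = 0 := hIuniq 0 0 (Nat.zero_le r) (le_refl 0)
          (by rw [hSsucc, hS0]; have := hn 0; omega)
        have hmem : Set.univ ∈ 𝒱 0 := by rw [h0]; rfl
        have hnr : ¬ S r ≤ 0 := by omega
        simp only [hU, if_neg hnr, hI0, hS0, Nat.sub_zero]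
        ext W
        simp only [Set.mem_union, Set.mem_setOf_eq, Set.mem_singleton_iff]
        constructor
        · rintro (⟨V, hV, rfl⟩ | hW)
          · rw [h0, Set.mem_singleton_iff] at hV
            subst hV
            exact hT0 0 Set.univ hrpos hmem
          · simp at hW
        · rintro rfl
          exact Or.inl ⟨Set.univ, hmem, (hT0 0 Set.univ hrpos hmem).symm⟩
    · -- decomposition steps
      intro s hs W hW
      have hi : I s < r := hIlt s hs
      have hij : S (I s) ≤ s := hIle s
      have hsu : s < S (I s + 1) := by
        have h1 : ¬ S (I s + 1) ≤ s :=
          Nat.findGreatest_is_greatest (P := fun i => S i ≤ s)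
            (Nat.lt_succ_self (I s)) hi
        omega
      set i := I s with hidef
      set j := s - S i with hjdef
      have hSi := hSsucc i
      have hjn : j < n i := by omega
      have hnotr : ¬ S r ≤ s := by omega
      -- facts about the next family
      have hnext1 : 𝒱 (i + 1) ⊆ U (s + 1) := by
        by_cases hcase : s + 1 < S (i + 1)
        · have hnr : ¬ S r ≤ s + 1 := by
            have := hSmono (show i + 1 ≤ r by omega)
            omega
          have hI1 : I (s + 1) = i := hIuniq i (s + 1) (le_of_lt hi) (by omega) hcase
          intro V hV
          simp only [hU, if_neg hnr, hI1]
          have hz : s + 1 - S i = j + 1 := by omega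
          rw [hz, if_pos (Nat.le_add_left 1 j)]
          exact Or.inr hV
        · have heq : s + 1 = S (i + 1) := by omega
          by_cases hir : i + 1 = r
          · have hle2 : S r ≤ s + 1 := by rw [← hir]; omega
            simp only [hU, if_pos hle2]
            rw [← hir]
          · have hi1 : i + 1 < r := by omega
            have hnr : ¬ S r ≤ s + 1 := by
              have := hSstrict hi1
              omega
            have hI1 : I (s + 1) = i + 1 := hIuniq (i + 1) (s + 1) (le_of_lt hi1) (by omega)
              (by rw [hSsucc (i + 1)]; have := hn (i + 1); omega)
            intro V hV
            simp only [hU, if_neg hnr, hI1]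
            have hz : s + 1 - S (i + 1) = 0 := by omega
            rw [hz]
            exact Or.inl ⟨V, hV, (hT0 (i + 1) V hi1 hV).symm⟩
      have hnext2 : j + 1 < n i → ∀ V, V ∈ 𝒱 i → T i V (j + 1) ∈ U (s + 1) := by
        intro hj1 V hV
        have hcase : s + 1 < S (i + 1) := by omega
        have hnr : ¬ S r ≤ s + 1 := by
          have := hSmono (show i + 1 ≤ r by omega)
          omega
        have hI1 : I (s + 1) = i := hIuniq i (s + 1) (le_of_lt hi) (by omega) hcase
        simp only [hU, if_neg hnr, hI1]
        have hz : s + 1 - S i = j + 1 := by omega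
        rw [hz]
        exact Or.inl ⟨V, hV, rfl⟩
      -- case analysis on W
      have hWs : W ∈ {W | ∃ V ∈ 𝒱 i, W = T i V j} ∪
          (if 1 ≤ j then 𝒱 (i + 1) else ∅) := by
        simpa only [hU, if_neg hnotr] using hW
      rcases hWs with ⟨V, hV, rfl⟩ | hW2
      · -- a tail member
        have hLK : L s ⊆ K i := by
          intro p hp
          simp only [hKdef]
          exact Set.mem_iUnion₂.mpr ⟨s, Finset.mem_Ico.mpr ⟨hij, hsu⟩, hp⟩
        refine admits_union (hTsplit i V j) ?_ ?_
        · obtain ⟨𝒟, h1, h2, h3⟩ := (hZ i V hi hV).2.1 j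
          exact ⟨𝒟, h1.trans hnext1, eDisjoint_mono hLK h2, h3⟩
        · by_cases hj1 : j + 1 < n i
          · exact ⟨{T i V (j + 1)}, Set.singleton_subset_iff.mpr (hnext2 hj1 V hV),
              eDisjoint_singleton _ _, (Set.sUnion_singleton _).symm⟩
          · refine ⟨∅, Set.empty_subset _, eDisjoint_empty _, ?_⟩
            rw [hTempty i V (j + 1) hi hV (by omega)]
            simp
      · -- a carried member
        by_cases hj : 1 ≤ j
        · rw [if_pos hj] at hW2
          exact admits_self (hnext1 hW2)
        · rw [if_neg hj] at hW2
          exact absurd hW2 (Set.notMem_empty W)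
    · -- uniformly bounded
      simp only [hU, if_pos (le_refl (S r))]
      exact hub
  · intro h
    exact ⟨fun _ => 2, fun _ => Nat.zero_lt_two, h⟩
end

section
/- Let (X, 𝓔) be a coarse space with coarse countable asymptotic dimension, witnessed by a sequence (nᵢ) of positive integers. Then (X, 𝓔) has straight finite coarse decomposition complexity (sFCDC). -/
lemma eDisjoint_anti {X : Type*} {E F : Set (X × X)} (h : E ⊆ F) {𝒰 : Set (Set X)}
    (hF : EDisjoint F 𝒰) : EDisjoint E 𝒰 := by
  intro U hU V hV hUV
  have h2 := hF U hU V hV hUV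
  exact Set.eq_empty_of_subset_empty (h2 ▸ Set.inter_subset_inter_right _ h)

lemma admits_anti {X : Type*} {E F : Set (X × X)} (h : E ⊆ F) {k : ℕ}
    {Y : Set X} {𝒰 : Set (Set X)} (hd : AdmitsDecomposition F k Y 𝒰) :
    AdmitsDecomposition E k Y 𝒰 := by
  obtain ⟨Z, hY, hZ⟩ := hd
  refine ⟨Z, hY, fun i => ?_⟩
  obtain ⟨𝒟, h1, h2, h3⟩ := hZ i
  exact ⟨𝒟, h1, eDisjoint_anti h h2, h3⟩

lemma admits_mono {X : Type*} {E : Set (X × X)} {a b : ℕ} (hab : a ≤ b)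
    {Y : Set X} {𝒰 : Set (Set X)} (h : AdmitsDecomposition E a Y 𝒰) :
    AdmitsDecomposition E b Y 𝒰 := by
  obtain ⟨Z, hY, hZ⟩ := h
  refine ⟨fun j => if hj : (j : ℕ) < a then Z ⟨j, hj⟩ else ∅, ?_, ?_⟩
  · rw [hY]; ext x
    simp only [Set.mem_iUnion]
    constructor
    · rintro ⟨i, hi⟩
      refine ⟨⟨i, lt_of_lt_of_le i.2 hab⟩, ?_⟩
      simp only [dif_pos i.2]
      exact hi
    · rintro ⟨j, hj⟩
      by_cases hja : (j : ℕ) < a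
      · rw [dif_pos hja] at hj; exact ⟨_, hj⟩
      · rw [dif_neg hja] at hj; exact absurd hj (Set.notMem_empty x)
  · intro j
    by_cases hja : (j : ℕ) < a
    · obtain ⟨𝒟, h1, h2, h3⟩ := hZ ⟨j, hja⟩
      exact ⟨𝒟, h1, h2, by simp only [dif_pos hja]; exact h3⟩
    · refine ⟨∅, Set.empty_subset _, fun U hU => absurd hU (Set.notMem_empty U), ?_⟩
      simp [hja]

lemma admits_self_s3 {X : Type*} {E : Set (X × X)} {U : Set X} {𝒰 : Set (Set X)}
    (hU : U ∈ 𝒰) {k : ℕ} (hk : 1 ≤ k) : AdmitsDecomposition E k U 𝒰 := by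
  refine admits_mono hk ?_
  refine ⟨fun _ => U, (Set.iUnion_const U).symm, fun i => ⟨{U}, Set.singleton_subset_iff.2 hU, ?_, by simp⟩⟩
  intro A hA B hB hAB
  simp only [Set.mem_singleton_iff] at hA hB
  exact absurd (hA.trans hB.symm) hAB

lemma union_fin_two {X : Type*} (A B : Set X) :
    (⋃ j : Fin 2, (if j = (0 : Fin 2) then A else B)) = A ∪ B := by
  ext x
  rw [Set.mem_iUnion]
  constructor
  · rintro ⟨j, hj⟩
    fin_cases j
    · left; simpa using hj
    · right; simpa using hj
  · rintro (hx | hx)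
    · exact ⟨0, by simpa using hx⟩
    · exact ⟨1, by simpa using hx⟩

lemma chain_segment {X : Type*} (L : ℕ → Set (X × X)) (K : Set (X × X)) :
    ∀ q : ℕ, ∀ (𝒜 ℬ : Set (Set X)) (s : ℕ),
    (∀ V ∈ 𝒜, AdmitsDecomposition K (q + 2) V ℬ) →
    (∀ t < q + 1, L (s + t) ⊆ K) →
    ∃ 𝒲 : ℕ → Set (Set X), 𝒲 0 = 𝒜 ∧ 𝒲 (q + 1) = ℬ ∧
      ∀ t < q + 1, ∀ V ∈ 𝒲 t, AdmitsDecomposition (L (s + t)) 2 V (𝒲 (t + 1)) := by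
  intro q
  induction q with
  | zero =>
    intro 𝒜 ℬ s hdec hL
    refine ⟨fun t => match t with | 0 => 𝒜 | _ + 1 => ℬ, rfl, rfl, ?_⟩
    intro t ht V hV
    interval_cases t
    exact admits_anti (hL 0 Nat.zero_lt_one) (hdec V hV)
  | succ q IH =>
    intro 𝒜 ℬ s hdec hL
    set Tails : Set (Set X) := {T | AdmitsDecomposition K (q + 2) T ℬ} with hTails
    obtain ⟨𝒲', hW0, hWend, hWstep⟩ := IH (ℬ ∪ Tails) ℬ (s + 1)
      (fun V hV => hV.elim (fun hB => admits_self_s3 hB (by omega)) (fun hT => hT))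
      (fun t ht => by
        have h1 := hL (t + 1) (by omega)
        rwa [show s + 1 + t = s + (t + 1) by omega])
    refine ⟨fun t => match t with | 0 => 𝒜 | k + 1 => 𝒲' k, rfl, hWend, ?_⟩
    intro t ht V hV
    match t with
    | 0 =>
      show AdmitsDecomposition (L (s + 0)) 2 V (𝒲' 0)
      obtain ⟨Z, hY, hZ⟩ := hdec V hV
      set T : Set X := ⋃ j : Fin (q + 2), Z j.succ with hT
      have hTmem : T ∈ Tails := ⟨fun j => Z j.succ, rfl, fun j => hZ j.succ⟩
      have hsplit : V = Z 0 ∪ T := by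
        rw [hY, hT]
        ext x
        constructor
        · intro hx
          obtain ⟨i, hi⟩ := Set.mem_iUnion.1 hx
          rcases Fin.eq_zero_or_eq_succ i with rfl | ⟨j, rfl⟩
          · exact Or.inl hi
          · exact Or.inr (Set.mem_iUnion.2 ⟨j, hi⟩)
        · rintro (hx | hx)
          · exact Set.mem_iUnion.2 ⟨0, hx⟩
          · obtain ⟨j, hj⟩ := Set.mem_iUnion.1 hx
            exact Set.mem_iUnion.2 ⟨j.succ, hj⟩
      refine ⟨fun j => if j = (0 : Fin 2) then Z 0 else T, by
        rw [union_fin_two]; exact hsplit, ?_⟩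
      intro i
      fin_cases i
      · obtain ⟨𝒟, h1, h2, h3⟩ := hZ 0
        exact ⟨𝒟, h1.trans (hW0 ▸ Set.subset_union_left),
          eDisjoint_anti (hL 0 (by omega)) h2, by simpa using h3⟩
      · refine ⟨{T}, ?_, ?_, by simp⟩
        · rw [hW0]
          exact Set.singleton_subset_iff.2 (Or.inr hTmem)
        · intro A hA B hB hAB
          simp only [Set.mem_singleton_iff] at hA hB
          exact absurd (hA.trans hB.symm) hAB
    | k + 1 =>
      have h1 := hWstep k (by omega) V hV
      rwa [show s + 1 + k = s + (k + 1) by omega] at h1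

lemma finset_biUnion_mem {X : Type*} (𝓔 : CoarseStructure X) (s : Finset ℕ)
    (f : ℕ → Set (X × X)) : (∀ i ∈ s, f i ∈ 𝓔.sets) → (⋃ i ∈ s, f i) ∈ 𝓔.sets := by
  classical
  induction s using Finset.induction with
  | empty =>
    intro _
    simp only [Finset.notMem_empty, Set.iUnion_of_empty, Set.iUnion_empty]
    exact 𝓔.subset_mem _ 𝓔.diagonal_mem _ (Set.empty_subset _)
  | @insert a s ha ih =>
    intro hf
    rw [Finset.set_biUnion_insert]
    exact 𝓔.union_mem _ (hf a (Finset.mem_insert_self a s)) _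
      (ih fun i hi => hf i (Finset.mem_insert_of_mem hi))

/-- Coarse countable asymptotic dimension (with witnessing sequence `n` of positive
integers) implies straight finite coarse decomposition complexity. -/
theorem countableAsdim_implies_sFCDC {X : Type*} (𝓔 : CoarseStructure X)
    (n : ℕ → ℕ) (hn : ∀ i, 0 < n i) (h : CAsdimWitness 𝓔 n) :
    SFCDC 𝓔 := by
  intro L hL
  classical
  set n' : ℕ → ℕ := fun i => max (n i - 1) 1 with hn'
  have hn'pos : ∀ i, 1 ≤ n' i := fun i => le_max_right _ _
  have hn'ge : ∀ i, n i ≤ n' i + 1 := by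
    intro i
    have h1 := hn i
    have h2 : n i - 1 ≤ n' i := le_max_left _ _
    omega
  set m : ℕ → ℕ := fun i => ∑ j ∈ Finset.range i, n' j with hm
  have hmsucc : ∀ i, m (i + 1) = m i + n' i := fun i => Finset.sum_range_succ _ i
  have hm0 : m 0 = 0 := Finset.sum_range_zero _
  have hmono : ∀ a b : ℕ, a ≤ b → m a ≤ m b := by
    intro a b hab
    exact Finset.sum_le_sum_of_subset (Finset.range_subset_range.2 hab)
  set K : ℕ → Set (X × X) := fun i => ⋃ t ∈ Finset.Ico (m i) (m (i + 1)), L t with hK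
  have hKmem : ∀ i, K i ∈ 𝓔.sets := fun i => finset_biUnion_mem 𝓔 _ _ (fun t _ => hL t)
  obtain ⟨r, 𝒱, hV0, hVdec, hVbd⟩ := h K hKmem
  have main : ∀ d : ℕ, ∀ i : ℕ, i + d = r →
      ∃ 𝒲 : ℕ → Set (Set X), 𝒲 0 = 𝒱 i ∧ 𝒲 (m r - m i) = 𝒱 r ∧
        ∀ t < m r - m i, ∀ V ∈ 𝒲 t,
          AdmitsDecomposition (L (m i + t)) 2 V (𝒲 (t + 1)) := by
    intro d
    induction d with
    | zero =>
      intro i hi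
      have hir : i = r := by omega
      refine ⟨fun _ => 𝒱 r, by rw [hir], by rw [hir], fun t ht => ?_⟩
      rw [hir, Nat.sub_self] at ht
      omega
    | succ d IH =>
      intro i hi
      obtain ⟨𝒲', hW0, hWend, hWstep⟩ := IH (i + 1) (by omega)
      have hir : i < r := by omega
      have hni := hn'pos i
      have hmi1 : m (i + 1) ≤ m r := hmono _ _ (by omega)
      have hsplitlen : m r - m i = n' i + (m r - m (i + 1)) := by
        have := hmsucc i
        omega
      have hdec : ∀ V ∈ 𝒱 i,
          AdmitsDecomposition (K i) ((n' i - 1) + 2) V (𝒱 (i + 1)) := by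
        intro V hV
        refine admits_mono ?_ (hVdec i hir V hV)
        have := hn'ge i
        omega
      have hLK : ∀ t < (n' i - 1) + 1, L (m i + t) ⊆ K i := by
        intro t ht
        have hmem : m i + t ∈ Finset.Ico (m i) (m (i + 1)) := by
          rw [Finset.mem_Ico, hmsucc i]
          omega
        exact Set.subset_biUnion_of_mem hmem
      obtain ⟨𝒮, hS0, hSend, hSstep⟩ :=
        chain_segment L (K i) (n' i - 1) (𝒱 i) (𝒱 (i + 1)) (m i) hdec hLK
      have hnieq : (n' i - 1) + 1 = n' i := by omega
      rw [hnieq] at hSend hSstep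
      refine ⟨fun t => if t < n' i then 𝒮 t else 𝒲' (t - n' i), ?_, ?_, ?_⟩
      · show (if 0 < n' i then 𝒮 0 else 𝒲' (0 - n' i)) = 𝒱 i
        rw [if_pos (show 0 < n' i by omega), hS0]
      · show (if m r - m i < n' i then 𝒮 (m r - m i) else 𝒲' (m r - m i - n' i)) = 𝒱 r
        rw [if_neg (show ¬ m r - m i < n' i by omega),
          show m r - m i - n' i = m r - m (i + 1) by omega]
        exact hWend
      · intro t ht V hV
        have hV' : V ∈ (if t < n' i then 𝒮 t else 𝒲' (t - n' i)) := hV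
        show AdmitsDecomposition (L (m i + t)) 2 V
          (if t + 1 < n' i then 𝒮 (t + 1) else 𝒲' (t + 1 - n' i))
        by_cases h1 : t < n' i
        · rw [if_pos h1] at hV'
          have hstep := hSstep t h1 V hV'
          by_cases h2 : t + 1 < n' i
          · rw [if_pos h2]
            exact hstep
          · have h3 : t + 1 = n' i := by omega
            rw [if_neg h2, show t + 1 - n' i = 0 by omega, hW0, ← hSend, ← h3]
            exact hstep
        · rw [if_neg h1] at hV'
          have hbound : t - n' i < m r - m (i + 1) := by omega
          have hstep := hWstep (t - n' i) hbound V hV'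
          rw [show m (i + 1) + (t - n' i) = m i + t by
            have := hmsucc i
            omega] at hstep
          rw [if_neg (show ¬ t + 1 < n' i by omega),
            show t + 1 - n' i = t - n' i + 1 by omega]
          exact hstep
  obtain ⟨𝒲, hW0, hWend, hWstep⟩ := main r 0 (by omega)
  refine ⟨m r, 𝒲, by rw [hW0, hV0], ?_, ?_⟩
  · intro i hi V hV
    have hstep := hWstep i (by omega) V hV
    rwa [show m 0 + i = i by omega] at hstep
  · rw [show m r = m r - m 0 by omega, hWend]
    exact hVbd
end

section
/- Let (X, 𝓔) and (Y, 𝓕) be coarse spaces, each with coarse countable asymptotic dimension. Then the product coarse space (X × Y, 𝓔 ∗ 𝓕) has coarse countable asymptotic dimension. -/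
lemma AdmitsDecomposition.mono {X : Type*} {E : Set (X × X)} {n m : ℕ} {Y : Set X}
    {𝒰 : Set (Set X)} (h : AdmitsDecomposition E n Y 𝒰) (hnm : n ≤ m) :
    AdmitsDecomposition E m Y 𝒰 := by
  obtain ⟨Z, hZ, hD⟩ := h
  refine ⟨fun i => if h : (i : ℕ) < n then Z ⟨i, h⟩ else ∅, ?_, ?_⟩
  · rw [hZ]; ext x
    simp only [Set.mem_iUnion]
    constructor
    · rintro ⟨i, hi⟩
      exact ⟨⟨i, lt_of_lt_of_le i.2 hnm⟩, by simp [i.2, hi]⟩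
    · rintro ⟨i, hi⟩
      by_cases h : (i : ℕ) < n
      · exact ⟨⟨i, h⟩, by simpa [h] using hi⟩
      · simp [h] at hi
  · intro i
    by_cases h : (i : ℕ) < n
    · simpa [h] using hD ⟨i, h⟩
    · refine ⟨∅, Set.empty_subset _, ?_, by simp [h]⟩
      intro U hU; exact absurd hU (Set.notMem_empty U)

/-- Coarse countable asymptotic dimension is preserved by coarse direct products. -/
theorem countableAsdim_prod {X Y : Type*} (𝓔 : CoarseStructure X) (𝓕 : CoarseStructure Y)
    (hX : CoarseCountableAsdim 𝓔) (hY : CoarseCountableAsdim 𝓕) :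
    CoarseCountableAsdim (prodCoarse 𝓔 𝓕) := by
  obtain ⟨nX, hnX, wX⟩ := hX
  obtain ⟨nY, hnY, wY⟩ := hY
  refine ⟨fun i => max (nX i) ((Finset.range (i+1)).sup nY), fun i =>
    lt_of_lt_of_le (hnX i) (le_max_left _ _), ?_⟩
  intro K hK
  obtain ⟨rX, 𝒱, hV0, hVdec, hVb⟩ := wX (fun i => projFst (K i)) (fun i => (hK i).1)
  obtain ⟨rY, 𝒲, hW0, hWdec, hWb⟩ := wY (fun j => projSnd (K (rX + j))) (fun j => (hK (rX + j)).2)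
  refine ⟨rX + rY, fun i => (fun p : Set X × Set Y => p.1 ×ˢ p.2) '' (𝒱 (min i rX) ×ˢ 𝒲 (i - rX)),
    ?_, ?_, ?_⟩
  · simp [hV0, hW0, Set.singleton_prod_singleton, Set.image_singleton, Set.univ_prod_univ]
  · intro i hi A hA
    obtain ⟨⟨V, W⟩, ⟨hV, hW⟩, rfl⟩ := hA
    by_cases hiX : i < rX
    · rw [min_eq_left hiX.le] at hV
      rw [Nat.sub_eq_zero_of_le hiX.le, hW0, Set.mem_singleton_iff] at hW
      subst hW
      obtain ⟨Z, hZeq, hZ⟩ := hVdec i hiX V hV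
      refine AdmitsDecomposition.mono ⟨fun k => Z k ×ˢ (Set.univ : Set Y), ?_, ?_⟩
        (le_max_left _ _)
      · show V ×ˢ (Set.univ : Set Y) = _
        rw [hZeq, Set.iUnion_prod_const]
      · intro k
        obtain ⟨𝒟, h𝒟sub, h𝒟disj, h𝒟eq⟩ := hZ k
        refine ⟨(fun V' => V' ×ˢ (Set.univ : Set Y)) '' 𝒟, ?_, ?_, ?_⟩
        · rintro A ⟨V', hV', rfl⟩
          refine ⟨(V', Set.univ), ⟨?_, ?_⟩, rfl⟩
          · rw [min_eq_left hiX]; exact h𝒟sub hV'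
          · rw [Nat.sub_eq_zero_of_le hiX, hW0]; rfl
        · rintro A ⟨V1, hV1, rfl⟩ B ⟨V2, hV2, rfl⟩ hne
          have hV12 : V1 ≠ V2 := fun h => hne (by rw [h])
          have hdisj := h𝒟disj V1 hV1 V2 hV2 hV12
          apply Set.eq_empty_iff_forall_notMem.mpr
          rintro ⟨⟨x, y⟩, ⟨x', y'⟩⟩ ⟨⟨⟨hx, -⟩, ⟨hx', -⟩⟩, hKi⟩
          have : (x, x') ∈ (V1 ×ˢ V2) ∩ projFst (K i) :=
            ⟨⟨hx, hx'⟩, ⟨_, hKi, rfl⟩⟩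
          rw [hdisj] at this
          exact this
        · rw [Set.sUnion_image]
          ext ⟨x, y⟩
          simp [h𝒟eq, Set.mem_sUnion]
    · push_neg at hiX
      set j := i - rX with hj
      have hjY : j < rY := by omega
      have hij : rX + j = i := by omega
      rw [min_eq_right hiX] at hV
      have hWd := hWdec j hjY W hW
      rw [hij] at hWd
      obtain ⟨Z, hZeq, hZ⟩ := hWd
      refine AdmitsDecomposition.mono ⟨fun k => V ×ˢ Z k, ?_, ?_⟩
        (le_trans (Finset.le_sup (Finset.mem_range.mpr (by omega : j < i + 1)))
          (le_max_right _ _))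
      · show V ×ˢ W = _
        rw [hZeq, Set.prod_iUnion]
      · intro k
        obtain ⟨𝒟, h𝒟sub, h𝒟disj, h𝒟eq⟩ := hZ k
        refine ⟨(fun W' => V ×ˢ W') '' 𝒟, ?_, ?_, ?_⟩
        · rintro A ⟨W', hW', rfl⟩
          refine ⟨(V, W'), ⟨?_, ?_⟩, rfl⟩
          · rw [min_eq_right (by omega : rX ≤ i + 1)]; exact hV
          · rw [(by omega : i + 1 - rX = j + 1)]; exact h𝒟sub hW'
        · rintro A ⟨W1, hW1, rfl⟩ B ⟨W2, hW2, rfl⟩ hne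
          have hW12 : W1 ≠ W2 := fun h => hne (by rw [h])
          have hdisj := h𝒟disj W1 hW1 W2 hW2 hW12
          apply Set.eq_empty_iff_forall_notMem.mpr
          rintro ⟨⟨x, y⟩, ⟨x', y'⟩⟩ ⟨⟨⟨-, hy⟩, ⟨-, hy'⟩⟩, hKi⟩
          have : (y, y') ∈ (W1 ×ˢ W2) ∩ projSnd (K i) :=
            ⟨⟨hy, hy'⟩, ⟨_, hKi, rfl⟩⟩
          rw [hdisj] at this
          exact this
        · rw [Set.sUnion_image]
          ext ⟨x, y⟩
          simp [h𝒟eq, Set.mem_sUnion]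
  · have h1 : min (rX + rY) rX = rX := min_eq_right (by omega)
    have h2 : rX + rY - rX = rY := by omega
    rw [UniformlyBounded]
    constructor
    · refine 𝓔.subset_mem _ hVb _ ?_
      rintro ⟨x, x'⟩ ⟨⟨⟨x0, y0⟩, ⟨x1, y1⟩⟩, hmem, heq⟩
      simp only [Set.mem_iUnion] at hmem
      obtain ⟨A, hA, hmem⟩ := hmem
      obtain ⟨⟨V, W⟩, ⟨hV, hW⟩, rfl⟩ := hA
      rw [h1] at hV
      obtain ⟨⟨hx0, -⟩, ⟨hx1, -⟩⟩ := hmem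
      cases heq
      exact Set.mem_biUnion hV ⟨hx0, hx1⟩
    · refine 𝓕.subset_mem _ hWb _ ?_
      rintro ⟨y, y'⟩ ⟨⟨⟨x0, y0⟩, ⟨x1, y1⟩⟩, hmem, heq⟩
      simp only [Set.mem_iUnion] at hmem
      obtain ⟨A, hA, hmem⟩ := hmem
      obtain ⟨⟨V, W⟩, ⟨hV, hW⟩, rfl⟩ := hA
      rw [h2] at hW
      obtain ⟨⟨-, hy0⟩, ⟨-, hy1⟩⟩ := hmem
      cases heq
      exact Set.mem_biUnion hW ⟨hy0, hy1⟩
end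

section
/- Consider ℕ with its usual metric and the unit interval [0,1] with its usual metric, and equip ℕ × [0,1] with the product metric d((n,s),(m,t)) = max(|n − m|, |s − t|). Then the C₀-coarse structure on the metric space ℕ × [0,1] is a proper subset of the product coarse structure 𝓔₀ ∗ 𝓕₀, where 𝓔₀ is the C₀-coarse structure on ℕ and 𝓕₀ is the C₀-coarse structure on [0,1]: every entourage of the C₀-coarse structure on ℕ × [0,1] belongs to 𝓔₀ ∗ 𝓕₀, and there exists a set E ⊆ (ℕ × [0,1]) × (ℕ × [0,1]) belonging to 𝓔₀ ∗ 𝓕₀ that is not in the C₀-coarse structure on ℕ × [0,1]. -/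
/-- `E` is an entourage of the `C₀`-coarse structure on a metric space `Z`: for every
`ε > 0` there is a bounded set `B ⊆ Z` such that `dist z w < ε` for every `(z, w) ∈ E`
with `(z, w) ∉ B × B`. -/
def IsC0Entourage {Z : Type*} [MetricSpace Z] (E : Set (Z × Z)) : Prop :=
  ∀ ε : ℝ, 0 < ε → ∃ B : Set Z, Bornology.IsBounded B ∧
    ∀ p ∈ E, p ∉ B ×ˢ B → dist p.1 p.2 < ε

/-- On `ℕ × [0,1]` with the max product metric (Mathlib's `Prod` metric), the
`C₀`-coarse structure is a proper subset of the product `𝓔₀ ∗ 𝓕₀` of the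
`C₀`-coarse structures of the factors: every `C₀`-entourage of `ℕ × [0,1]` has
`C₀` coordinate projections, and there is a set with `C₀` coordinate projections
that is not a `C₀`-entourage of `ℕ × [0,1]`. -/
theorem c0_prod_proper :
    (∀ E : Set ((ℕ × ↥(Set.Icc (0:ℝ) 1)) × (ℕ × ↥(Set.Icc (0:ℝ) 1))),
      IsC0Entourage E → IsC0Entourage (projFst E) ∧ IsC0Entourage (projSnd E)) ∧
    (∃ E : Set ((ℕ × ↥(Set.Icc (0:ℝ) 1)) × (ℕ × ↥(Set.Icc (0:ℝ) 1))),
      IsC0Entourage (projFst E) ∧ IsC0Entourage (projSnd E) ∧ ¬ IsC0Entourage E) := by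
  constructor
  · intro E hE
    constructor
    · intro ε hε
      obtain ⟨B, hB, h⟩ := hE ε hε
      refine ⟨Prod.fst '' B, (LipschitzWith.prod_fst.isBounded_image hB), ?_⟩
      rintro ⟨x₁, x₂⟩ ⟨⟨⟨a, b⟩, ⟨c, d⟩⟩, hq, hpq⟩ hp
      simp only [Prod.mk.injEq] at hpq
      obtain ⟨rfl, rfl⟩ := hpq
      have : ((a, b), (c, d)) ∉ B ×ˢ B := by
        intro ⟨h1, h2⟩
        exact hp ⟨⟨_, h1, rfl⟩, ⟨_, h2, rfl⟩⟩
      have := h _ hq this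
      calc dist a c ≤ dist ((a,b)) ((c,d)) := by
              rw [Prod.dist_eq]; exact le_max_left _ _
        _ < ε := this
    · intro ε hε
      refine ⟨Set.univ, isCompact_univ.isBounded, ?_⟩
      intro p _ hp
      exact absurd ⟨Set.mem_univ _, Set.mem_univ _⟩ hp
  · set z0 : ↥(Set.Icc (0:ℝ) 1) := ⟨0, by norm_num⟩
    set z1 : ↥(Set.Icc (0:ℝ) 1) := ⟨1, by norm_num⟩
    refine ⟨Set.range (fun n : ℕ => ((n, z0), (n, z1))), ?_, ?_, ?_⟩
    · intro ε hε
      refine ⟨∅, Bornology.isBounded_empty, ?_⟩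
      rintro ⟨x₁, x₂⟩ ⟨q, ⟨n, rfl⟩, hpq⟩ _
      simp only [Prod.mk.injEq] at hpq
      obtain ⟨rfl, rfl⟩ := hpq
      simpa using hε
    · intro ε hε
      refine ⟨Set.univ, isCompact_univ.isBounded, ?_⟩
      intro p _ hp
      exact absurd ⟨Set.mem_univ _, Set.mem_univ _⟩ hp
    · intro h
      obtain ⟨B, hB, hd⟩ := h 1 one_pos
      obtain ⟨r, hr⟩ := (LipschitzWith.prod_fst.isBounded_image hB).subset_closedBall 0
      set n : ℕ := ⌈r⌉₊ + 1
      have hn : ((n : ℕ), z0) ∉ B := by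
        intro hmem
        have : n ∈ Metric.closedBall (0:ℕ) r := hr ⟨_, hmem, rfl⟩
        have hle : dist n (0:ℕ) ≤ r := this
        have : (n : ℝ) ≤ r := by simpa [Nat.dist_eq] using hle
        have : (n : ℝ) ≤ ⌈r⌉₊ := le_trans this (Nat.le_ceil r)
        have hlt : ((⌈r⌉₊ : ℝ)) < n := by exact_mod_cast Nat.lt_succ_self ⌈r⌉₊
        linarith
      have key := hd ((n, z0), (n, z1)) ⟨n, rfl⟩ (by
        intro ⟨h1, _⟩
        exact hn h1)
      have : dist ((n, z0)) ((n, z1)) = 1 := by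
        rw [Prod.dist_eq]
        simp [z0, z1, Subtype.dist_eq, Real.dist_eq]
      rw [this] at key
      exact lt_irrefl 1 key
end
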